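/- For every integer k ≥ 0 and every real x with x² < 1, the hypergeometric value F(1, 2/3 + k; 2 + k; x²) is bounded above by 3(1+k). -/

import Mathlib

open Real

/-- The Gauss hypergeometric series `F(a,b;c;z) = ∑ (a)_n (b)_n / ((c)_n n!) z^n`. -/
noncomputable def hypF (a b c z : ℝ) : ℝ :=
  ∑' n : ℕ, (ascPochhammer ℝ n).eval a * (ascPochhammer ℝ n).eval b /
    ((ascPochhammer ℝ n).eval c * (n.factorial : ℝ)) * z ^ n

private lemma key_sum (k : ℕ) (n : ℕ) :
    ∑ i ∈ Finset.range n,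
      (ascPochhammer ℝ i).eval (2/3 + (k:ℝ)) / (ascPochhammer ℝ i).eval (2 + (k:ℝ))
    = 3 * (1 + (k : ℝ)) - 3 * ((ascPochhammer ℝ n).eval (2/3 + (k:ℝ)) /
        (ascPochhammer ℝ n).eval (2 + (k:ℝ))) * ((n : ℝ) + k + 1) := by
  induction n with
  | zero => simp; ring
  | succ n ih =>
    have hb : (0:ℝ) < (ascPochhammer ℝ n).eval (2/3 + (k:ℝ)) :=
      ascPochhammer_pos n _ (by positivity)
    have hc : (0:ℝ) < (ascPochhammer ℝ n).eval (2 + (k:ℝ)) :=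
      ascPochhammer_pos n _ (by positivity)
    rw [Finset.sum_range_succ, ih, ascPochhammer_succ_eval, ascPochhammer_succ_eval]
    have hcn : (0:ℝ) < (2 + (k:ℝ) + n) := by positivity
    field_simp
    push_cast
    ring
  
/-- For every integer `k ≥ 0` and real `x` with `x² < 1`,
`F(1, 2/3 + k; 2 + k; x²) ≤ 3(1+k)`. -/
theorem hypF_bound (k : ℕ) (x : ℝ) (hx : x ^ 2 < 1) :
    hypF 1 (2 / 3 + k) (2 + (k:ℝ)) (x ^ 2) ≤ 3 * (1 + (k : ℝ)) := by
  unfold hypF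
  have hb : ∀ n : ℕ, (0:ℝ) < (ascPochhammer ℝ n).eval (2/3 + (k:ℝ)) := fun n =>
    ascPochhammer_pos n _ (by positivity)
  have hc : ∀ n : ℕ, (0:ℝ) < (ascPochhammer ℝ n).eval (2 + (k:ℝ)) := fun n =>
    ascPochhammer_pos n _ (by positivity)
  set f : ℕ → ℝ := fun n => (ascPochhammer ℝ n).eval 1 * (ascPochhammer ℝ n).eval (2/3 + (k:ℝ)) /
    ((ascPochhammer ℝ n).eval (2 + (k:ℝ)) * (n.factorial : ℝ)) * (x ^ 2) ^ n with hf
  have hfA : ∀ n, f n ≤ (ascPochhammer ℝ n).eval (2/3 + (k:ℝ)) / (ascPochhammer ℝ n).eval (2 + (k:ℝ)) := by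
    intro n
    have h1 : f n = ((ascPochhammer ℝ n).eval (2/3 + (k:ℝ)) / (ascPochhammer ℝ n).eval (2 + (k:ℝ))) *
        (x ^ 2) ^ n := by
      rw [hf]
      simp only [ascPochhammer_eval_one]
      have hn : (n.factorial:ℝ) ≠ 0 := by positivity
      rw [mul_comm ((ascPochhammer ℝ n).eval (2 + (k:ℝ))) ((n.factorial:ℝ)),
        mul_div_mul_left _ _ hn]
    rw [h1]
    have hx2 : (x^2)^n ≤ 1 := pow_le_one₀ (by positivity) hx.le
    calc _ ≤ ((ascPochhammer ℝ n).eval (2/3 + (k:ℝ)) / (ascPochhammer ℝ n).eval (2 + (k:ℝ))) * 1 := by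
          apply mul_le_mul_of_nonneg_left hx2 (div_pos (hb n) (hc n)).le
      _ = _ := mul_one _
  apply Real.tsum_le_of_sum_range_le
  · intro n
    have h3 : (0:ℝ) ≤ (ascPochhammer ℝ n).eval (1:ℝ) := (ascPochhammer_pos n 1 one_pos).le
    exact mul_nonneg (div_nonneg (mul_nonneg h3 (hb n).le)
      (mul_nonneg (hc n).le (by positivity))) (by positivity)
  · intro n
    calc ∑ i ∈ Finset.range n, f i
        ≤ ∑ i ∈ Finset.range n,
            (ascPochhammer ℝ i).eval (2/3 + (k:ℝ)) / (ascPochhammer ℝ i).eval (2 + (k:ℝ)) :=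
          Finset.sum_le_sum fun i _ => hfA i
      _ = 3 * (1 + (k : ℝ)) - 3 * ((ascPochhammer ℝ n).eval (2/3 + (k:ℝ)) /
            (ascPochhammer ℝ n).eval (2 + (k:ℝ))) * ((n : ℝ) + k + 1) := key_sum k n
      _ ≤ 3 * (1 + (k : ℝ)) := by
          have := hb n; have := hc n
          nlinarith [div_pos (hb n) (hc n), Nat.cast_nonneg (α := ℝ) n, Nat.cast_nonneg (α := ℝ) k]
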